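/- In the lattice of flats K = (F, ⊆) of a Faigle geometry (P, F), semimodularity holds: if X, Y ∈ F, Z := X ∩ Y ≺ X, and U := cl(X ∪ Y), then Y ≺ U. -/

import Mathlib

/-- `X` is a down-set of the poset `P`. -/
def IsDownSet {P : Type*} [PartialOrder P] (X : Set P) : Prop :=
  ∀ ⦃x⦄, x ∈ X → ∀ ⦃y⦄, y ≤ x → y ∈ X

/-- `Y` covers `X` in the poset `(F, ⊆)`. -/
def CoversIn {P : Type*} (F : Set (Set P)) (X Y : Set P) : Prop :=
  X ⊂ Y ∧ ∀ Z ∈ F, ¬(X ⊂ Z ∧ Z ⊂ Y)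

/-- The closure operator associated to the closure system `F`:
`cl(X) = ⋂ {Y ∈ F : X ⊆ Y}`. -/
def clF {P : Type*} (F : Set (Set P)) (X : Set P) : Set P :=
  ⋂₀ {Y | Y ∈ F ∧ X ⊆ Y}

/-- `(P, F)` is a Faigle geometry. -/
structure IsFaigle {P : Type*} [PartialOrder P] [Finite P] (F : Set (Set P)) : Prop where
  univ_mem : Set.univ ∈ F
  inter_mem : ∀ X ∈ F, ∀ Y ∈ F, X ∩ Y ∈ F
  down : ∀ X ∈ F, IsDownSet X
  empty_mem : ∅ ∈ F
  Iic_mem : ∀ u : P, Set.Iic u ∈ F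
  Iio_mem : ∀ u : P, Set.Iio u ∈ F
  cp : ∀ (u : P), ∀ X ∈ F, u ∉ X → Set.Iio u ⊆ X →
      ∃ Y ∈ F, u ∈ Y ∧ CoversIn F X Y

lemma subset_clF {P : Type*} (F : Set (Set P)) (S : Set P) : S ⊆ clF F S := by
  intro x hx W hW; exact hW.2 hx

lemma clF_subset {P : Type*} {F : Set (Set P)} {S W : Set P} (hW : W ∈ F) (h : S ⊆ W) :
    clF F S ⊆ W := Set.sInter_subset_of_mem ⟨hW, h⟩

lemma clF_mem {P : Type*} [Finite P] {F : Set (Set P)} (hu : Set.univ ∈ F)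
    (hi : ∀ X ∈ F, ∀ Y ∈ F, X ∩ Y ∈ F) (S : Set P) : clF F S ∈ F := by
  have key : ∀ T : Set (Set P), T.Finite → T ⊆ F → Set.univ ∩ ⋂₀ T ∈ F := by
    intro T hT
    refine Set.Finite.induction_on (motive := fun T _ => T ⊆ F → Set.univ ∩ ⋂₀ T ∈ F) T hT (by simpa using hu) ?_
    intro a T ha hTfin ih hsub
    have heq : Set.univ ∩ ⋂₀ insert a T = a ∩ (Set.univ ∩ ⋂₀ T) := by
      rw [Set.sInter_insert]; ext x; simp
    rw [heq]
    exact hi a (hsub (Set.mem_insert a T)) _ (ih fun y hy => hsub (Set.mem_insert_of_mem _ hy))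
  have hfin : {Y | Y ∈ F ∧ S ⊆ Y}.Finite := Set.toFinite _
  have h := key _ hfin (fun y hy => hy.1)
  have heq : Set.univ ∩ ⋂₀ {Y | Y ∈ F ∧ S ⊆ Y} = clF F S := by
    apply Set.Subset.antisymm
    · exact Set.inter_subset_right
    · exact Set.subset_inter (Set.subset_univ _) subset_rfl
  rwa [heq] at h

/-- Semimodularity of the lattice of flats: if `Z := X ∩ Y` (the meet) covers
nothing between itself and `X`, i.e. `X ∩ Y ≺ X`, then `Y ≺ cl(X ∪ Y)` (the join). -/
theorem flats_semimodular {P : Type*} [PartialOrder P] [Finite P]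
    {F : Set (Set P)} (hF : IsFaigle F) {X Y : Set P} (hX : X ∈ F) (hY : Y ∈ F)
    (hcov : CoversIn F (X ∩ Y) X) :
    CoversIn F Y (clF F (X ∪ Y)) := by
  have hne : (X \ Y).Nonempty := by
    obtain ⟨x, hxX, hxZ⟩ := Set.exists_of_ssubset hcov.1
    exact ⟨x, hxX, fun hy => hxZ ⟨hxX, hy⟩⟩
  haveI := Finite.to_wellFoundedLT (α := P)
  obtain ⟨u, huXY, hmin⟩ :=
    (IsWellFounded.wf (r := ((· < ·) : P → P → Prop))).has_min (X \ Y) hne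
  have huX : u ∈ X := huXY.1
  have huY : u ∉ Y := huXY.2
  have hIioY : Set.Iio u ⊆ Y := by
    intro v hv
    have hvX : v ∈ X := hF.down X hX huX (le_of_lt hv)
    by_contra hvY
    exact hmin v ⟨hvX, hvY⟩ hv
  have hCmem : clF F (insert u (X ∩ Y)) ∈ F := clF_mem hF.univ_mem hF.inter_mem _
  have hCX : clF F (insert u (X ∩ Y)) ⊆ X := by
    refine clF_subset hX ?_
    rintro x (rfl | hx)
    · exact huX
    · exact hx.1
  have hZC : X ∩ Y ⊂ clF F (insert u (X ∩ Y)) := by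
    refine ⟨fun x hx => subset_clF F _ (Set.mem_insert_of_mem _ hx), fun h => ?_⟩
    exact huY (h (subset_clF F _ (Set.mem_insert u _))).2
  have hCeq : clF F (insert u (X ∩ Y)) = X := by
    by_contra hne'
    exact hcov.2 _ hCmem ⟨hZC, hCX, fun h => hne' (Set.Subset.antisymm hCX h)⟩
  obtain ⟨W, hWF, huW, hcovYW⟩ := hF.cp u Y hY huY hIioY
  have hDmem : clF F (X ∪ Y) ∈ F := clF_mem hF.univ_mem hF.inter_mem _
  have hXsubW : X ⊆ W := by
    rw [← hCeq]
    refine clF_subset hWF ?_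
    rintro x (rfl | hx)
    · exact huW
    · exact hcovYW.1.subset hx.2
  have hDW : clF F (X ∪ Y) ⊆ W := clF_subset hWF (Set.union_subset hXsubW hcovYW.1.subset)
  have hYD : Y ⊂ clF F (X ∪ Y) := by
    refine ⟨Set.subset_union_right.trans (subset_clF F _), fun h => ?_⟩
    exact huY (h (subset_clF F _ (Set.mem_union_left _ huX)))
  have hDeqW : clF F (X ∪ Y) = W := by
    by_contra h
    exact hcovYW.2 _ hDmem ⟨hYD, hDW, fun hs => h (Set.Subset.antisymm hDW hs)⟩
  rw [hDeqW]
  exact hcovYW
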